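/- The real roots of degree 0 are exactly the vectors e_i − e_j with i ≠ j: an element x ∈ W·β satisfies deg(x) = 0 if and only if x = e_i − e_j for some indices 1 ≤ i, j ≤ n with i ≠ j. -/

import Mathlib

open Finset

/-- `stdE n m` is the standard basis vector `e_m` (1-based index `m`) of `ℚ^n`. -/
def stdE (n m : ℕ) : Fin n → ℚ := fun j => if (j : ℕ) + 1 = m then 1 else 0

/-- the simple root `α_i = e_{i+1} - e_i` (1-based, for `1 ≤ i ≤ n-1`). -/
def alphaRoot (n i : ℕ) : Fin n → ℚ := stdE n (i + 1) - stdE n i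

/-- the simple root `β = e_1 + ⋯ + e_k`. -/
def betaRoot (n k : ℕ) : Fin n → ℚ := fun j => if (j : ℕ) < k then 1 else 0

/-- the quadratic form `q(x) = Σ x_i² + ((2-k)/k²)(Σ x_i)²`. -/
def qform (n k : ℕ) (x : Fin n → ℚ) : ℚ :=
  (∑ i, (x i) ^ 2) + ((2 - (k : ℚ)) / (k : ℚ) ^ 2) * (∑ i, x i) ^ 2

/-- the inner product obtained as the polarization of `q`. -/
def ip (n k : ℕ) (x y : Fin n → ℚ) : ℚ :=
  (qform n k (x + y) - qform n k x - qform n k y) / 2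

/-- the degree `deg(x) = (x_1 + ⋯ + x_n)/k`. -/
def degv (n k : ℕ) (x : Fin n → ℚ) : ℚ := (∑ i, x i) / (k : ℚ)

/-- `r(x) = x_{k+1} + ⋯ + x_n - 2 deg(x)`. -/
def rco (n k : ℕ) (x : Fin n → ℚ) : ℚ :=
  (∑ i ∈ Finset.univ.filter (fun i : Fin n => k ≤ (i : ℕ)), x i) - 2 * degv n k x

/-- the reflection `s_β : x ↦ x + r(x)·β`. -/
def sBeta (n k : ℕ) (x : Fin n → ℚ) : Fin n → ℚ := x + rco n k x • betaRoot n k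

/-- the map swapping coordinates `a` and `b` (0-based). -/
def sSwap (n : ℕ) (a b : Fin n) (x : Fin n → ℚ) : Fin n → ℚ := x ∘ Equiv.swap a b

/-- The Weyl group: the subgroup of bijections of `ℚ^n` generated by the simple
reflections `s_1, …, s_{n-1}` (as functions: `sSwap` of adjacent coordinates,
0-based) and `s_β` (as a function: `sBeta`). -/
def weyl (n k : ℕ) : Subgroup (Equiv.Perm (Fin n → ℚ)) :=
  Subgroup.closure
    {σ | ⇑σ = sBeta n k ∨ ∃ a b : Fin n, (a : ℕ) + 1 = (b : ℕ) ∧ ⇑σ = sSwap n a b}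

/-- The set of real roots: the orbit `W·β`. -/
def realRoots (n k : ℕ) : Set (Fin n → ℚ) :=
  {x | ∃ σ ∈ weyl n k, σ (betaRoot n k) = x}

/-- `dec x`: the coordinates of `x` rearranged in weakly decreasing order. -/
def dec {n : ℕ} (x : Fin n → ℚ) : Fin n → ℚ := fun i => x (Tuple.sort x i.rev)


section Aux
variable {n k : ℕ}

lemma card_filter_lt (hkn : k < n) :
    (Finset.univ.filter (fun i : Fin n => (i : ℕ) < k)).card = k := by
  have h : Finset.univ.filter (fun i : Fin n => (i : ℕ) < k) = Finset.Iio (⟨k, hkn⟩ : Fin n) := by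
    ext i; simp [Fin.lt_def]
  rw [h, Fin.card_Iio]

lemma filter_not_lt :
    (Finset.univ.filter (fun i : Fin n => ¬ (i : ℕ) < k))
      = Finset.univ.filter (fun i : Fin n => k ≤ (i : ℕ)) := by
  simp only [not_lt]

lemma sBeta_apply (x : Fin n → ℚ) (i : Fin n) :
    sBeta n k x i = if (i : ℕ) < k then x i + rco n k x else x i := by
  simp only [sBeta, Pi.add_apply, Pi.smul_apply, betaRoot, smul_eq_mul]
  split <;> ring

lemma sum_sBeta (hkn : k < n) (x : Fin n → ℚ) :
    ∑ i, sBeta n k x i = (∑ i, x i) + rco n k x * k := by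
  have h1 : ∑ i, sBeta n k x i
      = ∑ i ∈ Finset.univ.filter (fun i : Fin n => (i : ℕ) < k), (x i + rco n k x)
        + ∑ i ∈ Finset.univ.filter (fun i : Fin n => ¬ (i : ℕ) < k), x i := by
    simp_rw [sBeta_apply]; exact Finset.sum_ite _ _
  rw [h1, Finset.sum_add_distrib, Finset.sum_const, card_filter_lt hkn,
    nsmul_eq_mul]
  have := Finset.sum_filter_add_sum_filter_not Finset.univ (fun i : Fin n => (i : ℕ) < k) x
  linarith [this]

lemma sumsq_sBeta (hkn : k < n) (x : Fin n → ℚ) :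
    ∑ i, (sBeta n k x i) ^ 2
      = (∑ i, (x i) ^ 2) + 2 * rco n k x * (∑ i ∈ Finset.univ.filter (fun i : Fin n => (i : ℕ) < k), x i)
        + (rco n k x) ^ 2 * k := by
  have h1 : ∑ i, (sBeta n k x i) ^ 2
      = ∑ i ∈ Finset.univ.filter (fun i : Fin n => (i : ℕ) < k), (x i + rco n k x) ^ 2
        + ∑ i ∈ Finset.univ.filter (fun i : Fin n => ¬ (i : ℕ) < k), (x i) ^ 2 := by
    have : ∀ i : Fin n, (sBeta n k x i) ^ 2
        = if (i : ℕ) < k then (x i + rco n k x) ^ 2 else (x i) ^ 2 := by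
      intro i; rw [sBeta_apply]; split <;> rfl
    simp_rw [this]; exact Finset.sum_ite _ _
  have h2 : ∀ i ∈ Finset.univ.filter (fun i : Fin n => (i : ℕ) < k),
      (x i + rco n k x) ^ 2 = (x i) ^ 2 + (2 * rco n k x * x i + (rco n k x) ^ 2) := by
    intro i _; ring
  rw [h1, Finset.sum_congr rfl h2, Finset.sum_add_distrib, Finset.sum_add_distrib,
    Finset.sum_const, card_filter_lt hkn, nsmul_eq_mul, ← Finset.mul_sum]
  have := Finset.sum_filter_add_sum_filter_not Finset.univ (fun i : Fin n => (i : ℕ) < k)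
    (fun i => (x i) ^ 2)
  linarith [this]

lemma qform_sBeta (hk : 1 ≤ k) (hkn : k < n) (x : Fin n → ℚ) :
    qform n k (sBeta n k x) = qform n k x := by
  have hkQ : (k : ℚ) ≠ 0 := Nat.cast_ne_zero.mpr (by omega)
  set S := ∑ i, x i with hS
  set A := ∑ i ∈ Finset.univ.filter (fun i : Fin n => (i : ℕ) < k), x i with hA
  have hB : ∑ i ∈ Finset.univ.filter (fun i : Fin n => k ≤ (i : ℕ)), x i = S - A := by
    have h := Finset.sum_filter_add_sum_filter_not Finset.univ (fun i : Fin n => (i : ℕ) < k) x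
    rw [filter_not_lt] at h
    linarith [h, hS]
  have hr : rco n k x = (S - A) - 2 * S / (k : ℚ) := by
    rw [rco, hB, degv, ← hS]; ring
  rw [qform, qform, sumsq_sBeta hkn, sum_sBeta hkn, ← hS, ← hA, hr]
  field_simp
  ring

lemma rco_sBeta (hk : 1 ≤ k) (hkn : k < n) (x : Fin n → ℚ) :
    rco n k (sBeta n k x) = - rco n k x := by
  have hkQ : (k : ℚ) ≠ 0 := Nat.cast_ne_zero.mpr (by omega)
  have hB : ∑ i ∈ Finset.univ.filter (fun i : Fin n => k ≤ (i : ℕ)), sBeta n k x i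
      = ∑ i ∈ Finset.univ.filter (fun i : Fin n => k ≤ (i : ℕ)), x i := by
    refine Finset.sum_congr rfl fun i hi => ?_
    rw [sBeta_apply]
    have : ¬ (i : ℕ) < k := by simp at hi; omega
    simp [this]
  have hd : degv n k (sBeta n k x) = degv n k x + rco n k x := by
    rw [degv, sum_sBeta hkn, degv]
    field_simp
  rw [rco, hB, hd, rco]
  ring

lemma sBeta_invol (hk : 1 ≤ k) (hkn : k < n) : Function.Involutive (sBeta n k) := by
  intro x
  show sBeta n k x + rco n k (sBeta n k x) • betaRoot n k = x
  rw [rco_sBeta hk hkn]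
  show x + rco n k x • betaRoot n k + -rco n k x • betaRoot n k = x
  rw [neg_smul]
  exact add_neg_cancel_right _ _

lemma sSwap_invol (a b : Fin n) : Function.Involutive (sSwap n a b) := by
  intro x; funext i
  simp [sSwap, Function.comp, Equiv.swap_apply_self]

/-- integrality predicate preserved by the Weyl group -/
def isIntVec (n k : ℕ) (x : Fin n → ℚ) : Prop :=
  ∃ y : Fin n → ℤ, (∀ i, x i = (y i : ℚ)) ∧ (k : ℤ) ∣ ∑ i, y i

lemma isIntVec_sSwap (a b : Fin n) (x : Fin n → ℚ) (h : isIntVec n k x) :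
    isIntVec n k (sSwap n a b x) := by
  obtain ⟨y, hy, hd⟩ := h
  refine ⟨y ∘ Equiv.swap a b, fun i => hy _, ?_⟩
  rwa [show ∑ i, (y ∘ Equiv.swap a b) i = ∑ i, y i from
    Equiv.sum_comp (Equiv.swap a b) y]

lemma isIntVec_sBeta (hk : 1 ≤ k) (hkn : k < n) (x : Fin n → ℚ) (h : isIntVec n k x) :
    isIntVec n k (sBeta n k x) := by
  have hkQ : (k : ℚ) ≠ 0 := Nat.cast_ne_zero.mpr (by omega)
  obtain ⟨y, hy, m, hm⟩ := h
  set B : ℤ := ∑ i ∈ Finset.univ.filter (fun i : Fin n => k ≤ (i : ℕ)), y i with hBdef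
  have hsx : ∑ i, x i = ((k * m : ℤ) : ℚ) := by
    rw [show ∑ i, x i = ∑ i, ((y i : ℤ) : ℚ) from Finset.sum_congr rfl fun i _ => hy i]
    rw [← Int.cast_sum, hm]
  have hdeg : degv n k x = (m : ℚ) := by
    rw [degv, hsx]; push_cast; field_simp
  have hr : rco n k x = ((B - 2 * m : ℤ) : ℚ) := by
    rw [rco, hdeg, hBdef]
    push_cast
    rw [show ∑ i ∈ Finset.univ.filter (fun i : Fin n => k ≤ (i : ℕ)), x i
      = ∑ i ∈ Finset.univ.filter (fun i : Fin n => k ≤ (i : ℕ)), ((y i : ℤ) : ℚ) from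
      Finset.sum_congr rfl fun i _ => hy i]
  refine ⟨fun i => y i + (B - 2 * m) * (if (i : ℕ) < k then 1 else 0), fun i => ?_, ?_⟩
  · rw [sBeta_apply, hy i, hr]
    push_cast
    split_ifs <;> ring
  · have : ∑ i, (y i + (B - 2 * m) * (if (i : ℕ) < k then 1 else 0))
        = ∑ i, y i + (B - 2 * m) * k := by
      rw [Finset.sum_add_distrib, ← Finset.mul_sum, Finset.sum_boole,
        card_filter_lt hkn]
    rw [this, hm]
    exact ⟨m + (B - 2 * m), by ring⟩
/-- the permutation of `ℚ^n` induced by a permutation of coordinates -/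
def permF (n : ℕ) (π : Equiv.Perm (Fin n)) : Equiv.Perm (Fin n → ℚ) :=
  Equiv.arrowCongr π (Equiv.refl ℚ)

lemma permF_apply (π : Equiv.Perm (Fin n)) (x : Fin n → ℚ) :
    permF n π x = x ∘ π.symm := by
  funext i; simp [permF, Equiv.arrowCongr]

lemma permF_mul (π ρ : Equiv.Perm (Fin n)) :
    permF n (π * ρ) = permF n π * permF n ρ := by
  ext x i
  simp [permF_apply, Equiv.Perm.mul_def, Equiv.symm_trans_apply, Function.comp]

lemma permF_inv (π : Equiv.Perm (Fin n)) : permF n π⁻¹ = (permF n π)⁻¹ := by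
  rw [eq_inv_iff_mul_eq_one, ← permF_mul]
  ext x i
  simp [permF_apply]
  rfl

lemma permF_swap (a b : Fin n) : ⇑(permF n (Equiv.swap a b)) = sSwap n a b := by
  funext x i
  simp [permF_apply, sSwap, Equiv.symm_swap]

lemma permF_swap_mem_aux (m : ℕ) (a b : Fin n) (hm : (b : ℕ) = (a : ℕ) + m) :
    permF n (Equiv.swap a b) ∈ weyl n k := by
    induction m generalizing a b with
    | zero =>
      have : a = b := Fin.ext (by omega)
      subst this
      rw [Equiv.swap_self]
      have : permF n (Equiv.refl (Fin n)) = 1 := by ext x i; simp [permF_apply]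
      rw [this]; exact one_mem _
    | succ m ih =>
      rcases Nat.eq_zero_or_pos m with rfl | hm0
      · exact Subgroup.subset_closure (Or.inr ⟨a, b, by omega, permF_swap a b⟩)
      · have hc : (a : ℕ) + m < n := by omega
        set c : Fin n := ⟨a + m, hc⟩ with hcdef
        have hac : a ≠ c := by simp [hcdef, Fin.ext_iff]; omega
        have hab' : a ≠ b := by simp [Fin.ext_iff]; omega
        have key : Equiv.swap a b
            = Equiv.swap c b * Equiv.swap a c * (Equiv.swap c b)⁻¹ := by
          rw [← Equiv.swap_apply_apply]
          congr 1
          · exact (Equiv.swap_apply_of_ne_of_ne hac hab').symm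
          · exact (Equiv.swap_apply_left c b).symm
        rw [key, permF_mul, permF_mul, permF_inv]
        have h1 : permF n (Equiv.swap c b) ∈ weyl n k :=
          Subgroup.subset_closure (Or.inr ⟨c, b, by simp [hcdef]; omega, permF_swap c b⟩)
        have h2 : permF n (Equiv.swap a c) ∈ weyl n k := ih a c (by simp [hcdef])
        exact mul_mem (mul_mem h1 h2) (inv_mem h1)

lemma permF_swap_mem (a b : Fin n) : permF n (Equiv.swap a b) ∈ weyl n k := by
  rcases le_total (a : ℕ) (b : ℕ) with hab | hab
  · exact permF_swap_mem_aux (b - a) a b (by omega)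
  · rw [Equiv.swap_comm]
    exact permF_swap_mem_aux (a - b) b a (by omega)

lemma classify_int {n : ℕ} (y : Fin n → ℤ) (h0 : ∑ i, y i = 0) (h2 : ∑ i, (y i) ^ 2 = 2) :
    ∃ i j : Fin n, i ≠ j ∧ y i = 1 ∧ y j = -1 ∧ ∀ t, t ≠ i → t ≠ j → y t = 0 := by
  classical
  set S : Finset (Fin n) := Finset.univ.filter (fun i => y i ≠ 0) with hSdef
  have hmem : ∀ i, i ∈ S ↔ y i ≠ 0 := by intro i; simp [hSdef]
  have hout : ∀ i ∉ S, y i = 0 := by intro i hi; by_contra h; exact hi ((hmem i).mpr h)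
  have hsq : ∑ i ∈ S, (y i) ^ 2 = 2 := by
    rw [← h2]
    apply Finset.sum_subset (Finset.subset_univ S)
    intro i _ hi; rw [hout i hi]; ring
  have hs0 : ∑ i ∈ S, y i = 0 := by
    rw [← h0]
    exact Finset.sum_subset (Finset.subset_univ S) (fun i _ hi => hout i hi)
  have hone : ∀ i ∈ S, (1 : ℤ) ≤ (y i) ^ 2 := by
    intro i hi
    have h := (hmem i).mp hi
    rcases lt_or_gt_of_ne h with h' | h' <;> nlinarith
  have hcard : S.card ≤ 2 := by
    have h := Finset.card_nsmul_le_sum S (fun i => (y i) ^ 2) 1 hone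
    rw [hsq] at h
    simpa using h
  interval_cases hc : S.card
  · rw [Finset.card_eq_zero] at hc
    rw [hc] at hsq
    simp at hsq
  · obtain ⟨i, hi⟩ := Finset.card_eq_one.mp hc
    rw [hi] at hs0
    simp at hs0
    have := (hmem i).mp (hi ▸ Finset.mem_singleton_self i)
    exact absurd hs0 this
  · obtain ⟨i, j, hij, hS⟩ := Finset.card_eq_two.mp hc
    rw [hS, Finset.sum_pair hij] at hs0 hsq
    have hyj : y j = - y i := by linarith
    have hsq' : y i ^ 2 = 1 := by rw [hyj] at hsq; ring_nf at hsq; linarith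
    have hsq1 : (y i - 1) * (y i + 1) = 0 := by linear_combination hsq'
    rcases mul_eq_zero.mp hsq1 with h1 | h1
    · refine ⟨i, j, hij, by linarith, by linarith, fun t hti htj => ?_⟩
      apply hout; rw [hS]; simp [hti, htj]
    · refine ⟨j, i, hij.symm, by linarith, by linarith, fun t htj hti => ?_⟩
      apply hout; rw [hS]; simp [hti, htj]
lemma qform_sSwap (a b : Fin n) (x : Fin n → ℚ) :
    qform n k (sSwap n a b x) = qform n k x := by
  unfold qform sSwap
  rw [show ∑ i, ((x ∘ Equiv.swap a b) i) ^ 2 = ∑ i, (x i) ^ 2 from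
    Equiv.sum_comp (Equiv.swap a b) (fun i => (x i) ^ 2),
    show ∑ i, (x ∘ Equiv.swap a b) i = ∑ i, x i from
    Equiv.sum_comp (Equiv.swap a b) x]

lemma weyl_invariant (hk : 1 ≤ k) (hkn : k < n) :
    ∀ σ ∈ weyl n k, ∀ x : Fin n → ℚ,
      qform n k (σ x) = qform n k x ∧ (isIntVec n k x ↔ isIntVec n k (σ x)) := by
  intro σ hσ
  induction hσ using Subgroup.closure_induction with
  | mem τ hτ =>
    intro x
    rcases hτ with hβ | ⟨a, b, _, hsw⟩
    · rw [show τ x = sBeta n k x from congrFun hβ x]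
      refine ⟨qform_sBeta hk hkn x, fun h => isIntVec_sBeta hk hkn x h, fun h => ?_⟩
      have := isIntVec_sBeta hk hkn (sBeta n k x) h
      rwa [sBeta_invol hk hkn x] at this
    · rw [show τ x = sSwap n a b x from congrFun hsw x]
      refine ⟨qform_sSwap a b x, fun h => isIntVec_sSwap a b x h, fun h => ?_⟩
      have := isIntVec_sSwap a b (sSwap n a b x) h
      rwa [sSwap_invol a b x] at this
  | one => intro x; simp
  | mul τ ρ _ _ hτ hρ =>
    intro x
    rw [show (τ * ρ) x = τ (ρ x) from rfl]
    exact ⟨by rw [(hτ (ρ x)).1, (hρ x).1],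
      (hρ x).2.trans (hτ (ρ x)).2⟩
  | inv τ _ hτ =>
    intro x
    have h1 := hτ (τ⁻¹ x)
    have h2 : τ (τ⁻¹ x) = x := Equiv.apply_symm_apply τ x
    rw [h2] at h1
    exact ⟨h1.1.symm, h1.2.symm⟩

lemma sum_betaRoot (hkn : k < n) : ∑ i, betaRoot n k i = (k : ℚ) := by
  unfold betaRoot
  rw [Finset.sum_boole, card_filter_lt hkn]

lemma qform_betaRoot (hk : 1 ≤ k) (hkn : k < n) : qform n k (betaRoot n k) = 2 := by
  have hkQ : (k : ℚ) ≠ 0 := Nat.cast_ne_zero.mpr (by omega)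
  have h1 : ∑ i, (betaRoot n k i) ^ 2 = (k : ℚ) := by
    rw [← sum_betaRoot hkn]
    refine Finset.sum_congr rfl fun i _ => ?_
    unfold betaRoot; split <;> norm_num
  rw [qform, h1, sum_betaRoot hkn]
  field_simp
  ring

lemma isIntVec_betaRoot (hkn : k < n) : isIntVec n k (betaRoot n k) := by
  refine ⟨fun i => if (i : ℕ) < k then 1 else 0, fun i => by unfold betaRoot; split_ifs with h <;> simp [h], ?_⟩
  have : ∑ i : Fin n, (if (i : ℕ) < k then (1:ℤ) else 0) = (k:ℤ) := by
    rw [Finset.sum_boole, card_filter_lt hkn]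
  rw [this]
noncomputable def sBetaPerm (hk : 1 ≤ k) (hkn : k < n) : Equiv.Perm (Fin n → ℚ) :=
  Function.Involutive.toPerm (sBeta n k) (sBeta_invol hk hkn)

lemma sBetaPerm_mem (hk : 1 ≤ k) (hkn : k < n) : sBetaPerm hk hkn ∈ weyl n k :=
  Subgroup.subset_closure (Or.inl rfl)

-- the two distinguished indices
def i0 (hkn : k < n) : Fin n := ⟨0, by omega⟩
def ik (hkn : k < n) : Fin n := ⟨k, hkn⟩

lemma i0_ne_ik (hk : 1 ≤ k) (hkn : k < n) : i0 hkn ≠ ik hkn := by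
  simp [i0, ik, Fin.ext_iff]; omega

/-- the permuted root `β' = β ∘ swap(0,k)` -/
noncomputable def z1 (hkn : k < n) : Fin n → ℚ :=
  betaRoot n k ∘ Equiv.swap (i0 hkn) (ik hkn)

lemma z1_eq (hkn : k < n) : permF n (Equiv.swap (i0 hkn) (ik hkn)) (betaRoot n k) = z1 hkn := by
  rw [permF_apply, Equiv.symm_swap]; rfl

lemma sum_z1 (hkn : k < n) : ∑ i, z1 hkn i = (k : ℚ) := by
  rw [show ∑ i, z1 hkn i = ∑ i, betaRoot n k i from
    Equiv.sum_comp (Equiv.swap (i0 hkn) (ik hkn)) (betaRoot n k), sum_betaRoot hkn]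

lemma rco_z1 (hk : 1 ≤ k) (hkn : k < n) : rco n k (z1 hkn) = -1 := by
  have hkQ : (k : ℚ) ≠ 0 := Nat.cast_ne_zero.mpr (by omega)
  have hB : ∑ i ∈ Finset.univ.filter (fun i : Fin n => k ≤ (i : ℕ)), z1 hkn i = 1 := by
    have hcong : ∀ i ∈ Finset.univ.filter (fun i : Fin n => k ≤ (i : ℕ)),
        z1 hkn i = if i = ik hkn then 1 else 0 := by
      intro i hi
      simp only [Finset.mem_filter] at hi
      rcases eq_or_ne i (ik hkn) with rfl | hne
      · simp [z1, betaRoot, Equiv.swap_apply_right, i0, ik]; omega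
      · have hne0 : i ≠ i0 hkn := by
          simp [i0, Fin.ext_iff]; omega
        rw [z1, Function.comp_apply, Equiv.swap_apply_of_ne_of_ne hne0 hne]
        simp [betaRoot, hne]
        omega
    rw [Finset.sum_congr rfl hcong, Finset.sum_ite_eq']
    simp [ik]
  rw [rco, hB, degv, sum_z1 hkn, div_self hkQ]
  norm_num

lemma betaRoot_i0 (hk : 1 ≤ k) (hkn : k < n) : betaRoot n k (i0 hkn) = 1 := by
  have h : ((i0 hkn : Fin n) : ℕ) < k := by simp [i0]; omega
  simp [betaRoot, h]

lemma betaRoot_ik (hkn : k < n) : betaRoot n k (ik hkn) = 0 := by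
  have h : ¬ ((ik hkn : Fin n) : ℕ) < k := by simp [ik]
  simp [betaRoot, h]

lemma sBeta_z1 (hk : 1 ≤ k) (hkn : k < n) : sBeta n k (z1 hkn) = Pi.single (ik hkn) 1 - Pi.single (i0 hkn) 1 := by
  have hne : i0 hkn ≠ ik hkn := i0_ne_ik hk hkn
  funext t
  have h1 : sBeta n k (z1 hkn) t = z1 hkn t - betaRoot n k t := by
    rw [show sBeta n k (z1 hkn) = z1 hkn + rco n k (z1 hkn) • betaRoot n k from rfl,
      rco_z1 hk hkn]
    simp
    ring
  rw [h1, Pi.sub_apply, Pi.single_apply, Pi.single_apply]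
  rcases eq_or_ne t (i0 hkn) with rfl | h0
  · rw [z1, Function.comp_apply, Equiv.swap_apply_left, betaRoot_ik hkn,
      betaRoot_i0 hk hkn, if_neg hne, if_pos rfl]
  · rcases eq_or_ne t (ik hkn) with rfl | hik
    · rw [z1, Function.comp_apply, Equiv.swap_apply_right, betaRoot_i0 hk hkn,
        betaRoot_ik hkn, if_pos rfl, if_neg (Ne.symm hne)]
    · rw [z1, Function.comp_apply, Equiv.swap_apply_of_ne_of_ne h0 hik,
        if_neg hik, if_neg h0]
      norm_num

lemma permF_single (π : Equiv.Perm (Fin n)) (a : Fin n) (c : ℚ) :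
    permF n π (Pi.single a c) = Pi.single (π a) c := by
  rw [permF_apply]
  funext t
  simp only [Function.comp_apply, Pi.single_apply]
  congr 1
  rw [eq_iff_iff]
  exact ⟨fun h => by rw [← h, Equiv.apply_symm_apply], fun h => by rw [h, Equiv.symm_apply_apply]⟩

lemma permF_sub (π : Equiv.Perm (Fin n)) (u v : Fin n → ℚ) :
    permF n π (u - v) = permF n π u - permF n π v := by
  funext t; simp [permF_apply]

lemma exists_perm (hk : 1 ≤ k) (hkn : k < n) (i j : Fin n) (hij : i ≠ j) :
    ∃ π : Equiv.Perm (Fin n), π (ik hkn) = i ∧ π (i0 hkn) = j ∧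
      permF n π ∈ weyl n k := by
  set p1 := Equiv.swap (ik hkn) i with hp1
  have h1 : p1 (i0 hkn) ≠ i := by
    rcases eq_or_ne (i0 hkn) i with he | he
    · subst he
      rw [hp1, Equiv.swap_apply_right]
      exact Ne.symm (i0_ne_ik hk hkn)
    · rw [hp1, Equiv.swap_apply_of_ne_of_ne (i0_ne_ik hk hkn) he]
      exact he
  set p2 := Equiv.swap (p1 (i0 hkn)) j with hp2
  refine ⟨p2 * p1, ?_, ?_, ?_⟩
  · rw [Equiv.Perm.mul_apply, hp1, Equiv.swap_apply_left, hp2,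
      Equiv.swap_apply_of_ne_of_ne (Ne.symm h1) hij]
  · rw [Equiv.Perm.mul_apply, hp2, Equiv.swap_apply_left]
  · rw [show permF n (p2 * p1) = permF n p2 * permF n p1 from by
      ext x t; simp [permF_apply, Equiv.Perm.mul_def, Equiv.symm_trans_apply]]
    exact mul_mem (permF_swap_mem _ _) (permF_swap_mem _ _)

theorem degree_zero_real_roots (n k : ℕ) (hn : 2 ≤ n) (hk : 1 ≤ k) (hkn : k < n)
    (x : Fin n → ℚ) :
    (x ∈ realRoots n k ∧ degv n k x = 0) ↔
      (∃ i j : Fin n, i ≠ j ∧ x = Pi.single i 1 - Pi.single j 1) := by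
  have hkQ : (k : ℚ) ≠ 0 := Nat.cast_ne_zero.mpr (by omega)
  constructor
  · rintro ⟨⟨σ, hσ, rfl⟩, hdeg⟩
    have hinv := weyl_invariant hk hkn σ hσ (betaRoot n k)
    have hq : qform n k (σ (betaRoot n k)) = 2 := by
      rw [hinv.1, qform_betaRoot hk hkn]
    have hP : isIntVec n k (σ (betaRoot n k)) := hinv.2.mp (isIntVec_betaRoot hkn)
    obtain ⟨y, hy, -⟩ := hP
    have hsum0 : ∑ i, σ (betaRoot n k) i = 0 := by
      rw [degv, div_eq_zero_iff] at hdeg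
      rcases hdeg with h | h
      · exact h
      · exact absurd h hkQ
    have hy0 : ∑ i, y i = 0 := by
      have h : ((∑ i, y i : ℤ) : ℚ) = 0 := by
        push_cast
        rw [show ∑ i, ((y i : ℚ)) = ∑ i, σ (betaRoot n k) i from
          Finset.sum_congr rfl fun i _ => (hy i).symm, hsum0]
      exact_mod_cast h
    have hsq : ∑ i, (y i) ^ 2 = 2 := by
      have h2 : ∑ i, (σ (betaRoot n k) i) ^ 2 = 2 := by
        rw [qform, hsum0] at hq
        simpa using hq
      have h : ((∑ i, (y i) ^ 2 : ℤ) : ℚ) = 2 := by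
        push_cast
        rw [show ∑ i, ((y i : ℚ)) ^ 2 = ∑ i, (σ (betaRoot n k) i) ^ 2 from
          Finset.sum_congr rfl fun i _ => by rw [hy i], h2]
      exact_mod_cast h
    obtain ⟨i, j, hij, hyi, hyj, hrest⟩ := classify_int y hy0 hsq
    refine ⟨i, j, hij, ?_⟩
    funext t
    rw [hy t, Pi.sub_apply, Pi.single_apply, Pi.single_apply]
    rcases eq_or_ne t i with rfl | hti
    · rw [if_pos rfl, if_neg hij, hyi]; norm_num
    · rcases eq_or_ne t j with rfl | htj
      · rw [if_neg hti, if_pos rfl, hyj]; norm_num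
      · rw [if_neg hti, if_neg htj, hrest t hti htj]; norm_num
  · rintro ⟨i, j, hij, rfl⟩
    constructor
    · obtain ⟨π, hπik, hπi0, hπmem⟩ := exists_perm hk hkn i j hij
      refine ⟨permF n π * sBetaPerm hk hkn * permF n (Equiv.swap (i0 hkn) (ik hkn)),
        mul_mem (mul_mem hπmem (sBetaPerm_mem hk hkn)) (permF_swap_mem _ _), ?_⟩
      rw [Equiv.Perm.mul_apply, Equiv.Perm.mul_apply, z1_eq hkn]
      rw [show sBetaPerm hk hkn (z1 hkn) = sBeta n k (z1 hkn) from rfl, sBeta_z1 hk hkn,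
        permF_sub, permF_single, permF_single, hπik, hπi0]
    · have hs : ∑ t, (Pi.single i 1 - Pi.single j 1 : Fin n → ℚ) t = 0 := by
        simp only [Pi.sub_apply]
        rw [Finset.sum_sub_distrib]
        simp [Finset.sum_pi_single']
      rw [degv, hs, zero_div]
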